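/- If n ≡ 2 (mod 4), then f(n) ≤ 3: there is an n-uniform hypergraph with 3 edges and positive discrepancy. -/

import Mathlib

theorem stmt_16 (n : ℕ) (hn : n % 4 = 2) :
    ∃ E : Finset (Finset ℕ), E.card = 3 ∧ (∀ e ∈ E, e.card = n) ∧
      ∀ c : ℕ → Bool, ∃ e ∈ E,
        (e.filter fun v => c v = true).card ≠ (e.filter fun v => c v = false).card := by
  obtain ⟨k, hk⟩ : ∃ k, n = 4 * k + 2 := ⟨n / 4, by omega⟩
  set m := 2 * k + 1 with hm
  set A := Finset.Ico 0 m with hA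
  set B := Finset.Ico m (2 * m) with hB
  set C := Finset.Ico (2 * m) (3 * m) with hC
  set e1 := Finset.Ico 0 (2 * m) with he1
  set e2 := Finset.Ico m (3 * m) with he2
  set e3 := A ∪ C with he3
  have hAB : e1 = A ∪ B := (Finset.Ico_union_Ico_eq_Ico (by omega) (by omega)).symm
  have hBC : e2 = B ∪ C := (Finset.Ico_union_Ico_eq_Ico (by omega) (by omega)).symm
  have hdAB : Disjoint A B := by
    simp only [Finset.disjoint_left, hA, hB, Finset.mem_Ico]; omega
  have hdBC : Disjoint B C := by
    simp only [Finset.disjoint_left, hB, hC, Finset.mem_Ico]; omega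
  have hdAC : Disjoint A C := by
    simp only [Finset.disjoint_left, hA, hC, Finset.mem_Ico]; omega
  have hcA : A.card = m := by simp [hA]
  have hcB : B.card = m := by simp [hB]; omega
  have hcC : C.card = m := by simp [hC]; omega
  have h0e1 : (0 : ℕ) ∈ e1 := by simp [he1]; omega
  have h0e2 : (0 : ℕ) ∉ e2 := by simp [he2]
  have h0e3 : (0 : ℕ) ∈ e3 := by simp [he3, hA, hC]; omega
  have hme1 : m ∈ e1 := by simp [he1]; omega
  have hme3 : m ∉ e3 := by simp [he3, hA, hC]; omega
  have h12 : e1 ≠ e2 := fun h => h0e2 (h ▸ h0e1)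
  have h13 : e1 ≠ e3 := fun h => hme3 (h ▸ hme1)
  have h23 : e2 ≠ e3 := fun h => h0e2 (h ▸ h0e3)
  refine ⟨{e1, e2, e3}, ?_, ?_, ?_⟩
  · rw [Finset.card_insert_of_notMem (by simp [h12, h13]),
      Finset.card_insert_of_notMem (by simp [h23]), Finset.card_singleton]
  · intro e he
    simp only [Finset.mem_insert, Finset.mem_singleton] at he
    rcases he with rfl | rfl | rfl
    · simp [he1]; omega
    · simp [he2]; omega
    · rw [he3, Finset.card_union_of_disjoint hdAC, hcA, hcC]; omega
  · intro c
    by_contra hcon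
    push_neg at hcon
    have key : ∀ S : Finset ℕ,
        (S.filter fun v => c v = true).card + (S.filter fun v => c v = false).card
          = S.card := by
      intro S
      have := Finset.card_filter_add_card_filter_not
        (s := S) (p := fun v => c v = true)
      simpa using this
    have bal : ∀ e ∈ ({e1, e2, e3} : Finset (Finset ℕ)),
        2 * (e.filter fun v => c v = true).card = e.card := by
      intro e he
      have h1 := hcon e he
      have h2 := key e
      omega
    have b1 := bal e1 (by simp)
    have b2 := bal e2 (by simp)
    have b3 := bal e3 (by simp)
    have split : ∀ (S T : Finset ℕ), Disjoint S T →
        ((S ∪ T).filter fun v => c v = true).card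
          = (S.filter fun v => c v = true).card + (T.filter fun v => c v = true).card := by
      intro S T hd
      rw [Finset.filter_union, Finset.card_union_of_disjoint
        (Finset.disjoint_filter_filter hd)]
    rw [hAB, split A B hdAB] at b1
    rw [hBC, split B C hdBC] at b2
    rw [he3, split A C hdAC] at b3
    rw [Finset.card_union_of_disjoint hdAB, hcA, hcB] at b1
    rw [Finset.card_union_of_disjoint hdBC, hcB, hcC] at b2
    rw [Finset.card_union_of_disjoint hdAC, hcA, hcC] at b3
    omega
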